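/- Let K_{1,n} be the star with n ≥ 3 leaves and let p ≥ 2 be an integer. Then C_{p,1}^T(K_{1,n}) ≤ n + 2p − 1. -/

import Mathlib

open SimpleGraph

/-- A (p,1)-total labelling of `G`: adjacent vertices get distinct colors, edges sharing an
endpoint get distinct colors, and a vertex and an incident edge differ by at least `p`. -/
def IsPOneTotalLabelling {V : Type*} (G : SimpleGraph V) (p : ℕ)
    (cv : V → ℤ) (ce : G.edgeSet → ℤ) : Prop :=
  (∀ u v : V, G.Adj u v → cv u ≠ cv v) ∧
  (∀ e f : G.edgeSet, e ≠ f → (∃ v : V, v ∈ (e : Sym2 V) ∧ v ∈ (f : Sym2 V)) → ce e ≠ ce f) ∧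
  (∀ (v : V) (e : G.edgeSet), v ∈ (e : Sym2 V) → (p : ℤ) ≤ |cv v - ce e|)

/-- χ_{p,1}^T(G): least `k` such that `G` has a (p,1)-total labelling with colors in
`{0, …, k-1}`. -/
noncomputable def pOneTotalChromatic {V : Type*} (G : SimpleGraph V) (p : ℕ) : ℕ :=
  sInf {k : ℕ | ∃ cv ce, IsPOneTotalLabelling G p cv ce ∧
    (∀ v : V, cv v ∈ Set.Ico (0 : ℤ) k) ∧ (∀ e : G.edgeSet, ce e ∈ Set.Ico (0 : ℤ) k)}

/-- λ_p^T(G): least `k` such that `G` has a (p,1)-total labelling with colors in `{0, …, k}`. -/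
noncomputable def pOneTotalNumber {V : Type*} (G : SimpleGraph V) (p : ℕ) : ℕ :=
  sInf {k : ℕ | ∃ cv ce, IsPOneTotalLabelling G p cv ce ∧
    (∀ v : V, cv v ∈ Set.Icc (0 : ℤ) k) ∧ (∀ e : G.edgeSet, ce e ∈ Set.Icc (0 : ℤ) k)}

/-- `G` is `L`-(p,1)-total labelable for list assignment `(Lv, Le)`. -/
def ListPOneTotalLabelable {V : Type*} (G : SimpleGraph V) (p : ℕ)
    (Lv : V → Finset ℤ) (Le : G.edgeSet → Finset ℤ) : Prop :=
  ∃ cv ce, IsPOneTotalLabelling G p cv ce ∧ (∀ v, cv v ∈ Lv v) ∧ (∀ e, ce e ∈ Le e)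

/-- C_{p,1}^T(G): least `k` such that `G` is `L`-(p,1)-total labelable for every list
assignment whose lists all have size `k`. -/
noncomputable def pOneTotalChoosability {V : Type*} (G : SimpleGraph V) (p : ℕ) : ℕ :=
  sInf {k : ℕ | ∀ (Lv : V → Finset ℤ) (Le : G.edgeSet → Finset ℤ),
    (∀ v, (Lv v).card = k) → (∀ e, (Le e).card = k) → ListPOneTotalLabelable G p Lv Le}

/-- An L(p,q)-labelling of `H`. -/
def IsLpqLabelling {V : Type*} (H : SimpleGraph V) (p q : ℕ) (f : V → ℤ) : Prop :=
  (∀ u v : V, H.Adj u v → (p : ℤ) ≤ |f u - f v|) ∧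
  (∀ u v : V, H.dist u v = 2 → (q : ℤ) ≤ |f u - f v|)

/-- χ^{p,q}(H): least `k` such that `H` has an L(p,q)-labelling with colors in `{0, …, k-1}`. -/
noncomputable def LpqChromatic {V : Type*} (H : SimpleGraph V) (p q : ℕ) : ℕ :=
  sInf {k : ℕ | ∃ f, IsLpqLabelling H p q f ∧ ∀ v : V, f v ∈ Set.Ico (0 : ℤ) k}

/-- χ_l^{p,q}(H): least `k` such that from every assignment of lists of size `k`, `H` has an
L(p,q)-labelling choosing each vertex's color from its list. -/
noncomputable def listLpqChromatic {V : Type*} (H : SimpleGraph V) (p q : ℕ) : ℕ :=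
  sInf {k : ℕ | ∀ L : V → Finset ℤ, (∀ v, (L v).card = k) →
    ∃ f, IsLpqLabelling H p q f ∧ ∀ v : V, f v ∈ L v}

/-- The star `K_{1,n}`: vertex `0` is the center, adjacent to the `n` leaves. -/
def starGraph (n : ℕ) : SimpleGraph (Fin (n + 1)) :=
  SimpleGraph.fromRel (fun v w => v = 0 ∨ w = 0)

/-- The incidence graph `S_I(G)`: replace every edge of `G` by a path of length 2. -/
def incidenceGraph {V : Type*} (G : SimpleGraph V) : SimpleGraph (V ⊕ G.edgeSet) where
  Adj x y :=
    (∃ (v : V) (e : G.edgeSet), x = Sum.inl v ∧ y = Sum.inr e ∧ v ∈ (e : Sym2 V)) ∨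
    (∃ (v : V) (e : G.edgeSet), x = Sum.inr e ∧ y = Sum.inl v ∧ v ∈ (e : Sym2 V))
  symm := ⟨by
    rintro x y (⟨v, e, rfl, rfl, h⟩ | ⟨v, e, rfl, rfl, h⟩)
    · exact Or.inr ⟨v, e, rfl, rfl, h⟩
    · exact Or.inl ⟨v, e, rfl, rfl, h⟩⟩
  loopless := ⟨by
    rintro x (⟨v, e, h1, h2, -⟩ | ⟨v, e, h1, h2, -⟩) <;> subst h1 <;> simp at h2⟩

/-- `H` is a minor of `G`: there are pairwise disjoint nonempty connected branch sets in `G`,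
one for each vertex of `H`, with an edge of `G` between the branch sets of any two vertices
adjacent in `H`. -/
def IsGraphMinor {W V : Type*} (H : SimpleGraph W) (G : SimpleGraph V) : Prop :=
  ∃ B : W → Set V,
    (∀ w, (B w).Nonempty) ∧
    (∀ w, (G.induce (B w)).Connected) ∧
    (∀ w₁ w₂, w₁ ≠ w₂ → Disjoint (B w₁) (B w₂)) ∧
    (∀ w₁ w₂, H.Adj w₁ w₂ → ∃ v₁ ∈ B w₁, ∃ v₂ ∈ B w₂, G.Adj v₁ v₂)

/-- A graph is outerplanar iff it has neither `K₄` nor `K_{2,3}` as a minor. -/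
def Outerplanar {V : Type*} (G : SimpleGraph V) : Prop :=
  ¬ IsGraphMinor (completeGraph (Fin 4)) G ∧
  ¬ IsGraphMinor (completeBipartiteGraph (Fin 2) (Fin 3)) G

lemma star_edge (n : ℕ) (e : (_root_.starGraph n).edgeSet) :
    ∃ v : Fin (n+1), v ≠ 0 ∧ (e : Sym2 (Fin (n+1))) = s(0, v) := by
  obtain ⟨s, hs⟩ := e
  induction s using Sym2.ind with
  | _ a b =>
    rw [SimpleGraph.mem_edgeSet] at hs
    simp only [_root_.starGraph, SimpleGraph.fromRel_adj] at hs
    obtain ⟨hab, h⟩ := hs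
    have h' : a = 0 ∨ b = 0 := by tauto
    rcases h' with h'|h'
    · subst h'; exact ⟨b, fun hb => hab hb.symm, rfl⟩
    · subst h'; exact ⟨a, fun ha => hab ha, Sym2.eq_swap⟩

lemma star_adj (n : ℕ) {v : Fin (n+1)} (hv : v ≠ 0) : (_root_.starGraph n).Adj 0 v := by
  simp only [_root_.starGraph, SimpleGraph.fromRel_adj]
  refine ⟨fun h => hv h.symm, ?_⟩
  tauto

lemma star_card_edge (n : ℕ) [Fintype (_root_.starGraph n).edgeSet] :
    Fintype.card (_root_.starGraph n).edgeSet ≤ n := by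
  have hg : Function.Injective (fun e : (_root_.starGraph n).edgeSet =>
      (⟨(star_edge n e).choose, (star_edge n e).choose_spec.1⟩ : {v : Fin (n+1) // v ≠ 0})) := by
    intro e e' h
    simp only [Subtype.mk.injEq] at h
    apply Subtype.ext
    rw [(star_edge n e).choose_spec.2, (star_edge n e').choose_spec.2, h]
  calc Fintype.card (_root_.starGraph n).edgeSet ≤ Fintype.card {v : Fin (n+1) // v ≠ 0} :=
        Fintype.card_le_of_injective _ hg
    _ = n := by simp [Fintype.card_subtype_compl]

/-- C_{p,1}^T(K_{1,n}) ≤ n + 2p − 1 for n ≥ 3 and p ≥ 2. -/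
theorem pOneTotalChoosability_starGraph_le (n p : ℕ) (hn : 3 ≤ n) (hp : 2 ≤ p) :
    pOneTotalChoosability (_root_.starGraph n) p ≤ n + 2 * p - 1 := by
  classical
  apply Nat.sInf_le
  intro Lv Le hLv hLe
  -- choose center color
  have h0 : (Lv 0).Nonempty := Finset.card_pos.mp (by rw [hLv]; omega)
  obtain ⟨c0, hc0⟩ := h0
  -- edge lists avoiding the window around c0
  set t : (_root_.starGraph n).edgeSet → Finset ℤ :=
    fun e => Le e \ Finset.Icc (c0 - ((p:ℤ) - 1)) (c0 + ((p:ℤ) - 1)) with ht_def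
  have hIcc : ∀ a : ℤ, (Finset.Icc (a - ((p:ℤ) - 1)) (a + ((p:ℤ) - 1))).card = 2*p - 1 := by
    intro a; rw [Int.card_Icc]; omega
  have ht : ∀ e, n ≤ (t e).card := by
    intro e
    have h1 := Finset.card_le_card_sdiff_add_card (s := Le e)
      (t := Finset.Icc (c0 - ((p:ℤ) - 1)) (c0 + ((p:ℤ) - 1)))
    rw [hLe, hIcc] at h1
    simp only [ht_def]
    omega
  haveI : Fintype (_root_.starGraph n).edgeSet := Fintype.ofFinite _
  have hall : ∀ s : Finset (_root_.starGraph n).edgeSet, s.card ≤ (s.biUnion t).card := by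
    intro s
    rcases s.eq_empty_or_nonempty with rfl | ⟨e, he⟩
    · simp
    · calc s.card ≤ Fintype.card (_root_.starGraph n).edgeSet := Finset.card_le_univ s
        _ ≤ n := star_card_edge n
        _ ≤ (t e).card := ht e
        _ ≤ (s.biUnion t).card := Finset.card_le_card (Finset.subset_biUnion_of_mem t he)
  obtain ⟨f, hfinj, hft⟩ := (Finset.all_card_le_biUnion_card_iff_exists_injective t).mp hall
  -- edge incident to a leaf
  set edgeOf : ∀ v : Fin (n+1), v ≠ 0 → (_root_.starGraph n).edgeSet :=
    fun v h => ⟨s(0, v), star_adj n h⟩ with hedgeOf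
  -- leaf lists
  set avail : ∀ v : Fin (n+1), v ≠ 0 → Finset ℤ := fun v h =>
    Lv v \ insert c0 (Finset.Icc (f (edgeOf v h) - ((p:ℤ) - 1)) (f (edgeOf v h) + ((p:ℤ) - 1)))
    with havail
  have hav : ∀ v h, (avail v h).Nonempty := by
    intro v h
    rw [← Finset.card_pos]
    have h1 := Finset.card_le_card_sdiff_add_card (s := Lv v)
      (t := insert c0 (Finset.Icc (f (edgeOf v h) - ((p:ℤ) - 1)) (f (edgeOf v h) + ((p:ℤ) - 1))))
    have h2 := Finset.card_insert_le c0
      (Finset.Icc (f (edgeOf v h) - ((p:ℤ) - 1)) (f (edgeOf v h) + ((p:ℤ) - 1)))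
    rw [hIcc] at h2
    rw [hLv] at h1
    simp only [havail]
    omega
  set cv : Fin (n+1) → ℤ := fun v => if h : v = 0 then c0 else (avail v h).min' (hav v h)
    with hcv
  have hcv0 : cv 0 = c0 := dif_pos rfl
  have hcvv : ∀ v (h : v ≠ 0), cv v ∈ avail v h := by
    intro v h; rw [hcv]; simp only [dif_neg h]; exact Finset.min'_mem _ _
  refine ⟨cv, f, ⟨?_, ?_, ?_⟩, ?_, fun e => (Finset.mem_sdiff.mp (hft e)).1⟩
  · -- adjacent vertices distinct
    intro u v huv
    simp only [_root_.starGraph, SimpleGraph.fromRel_adj] at huv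
    obtain ⟨hne, h⟩ := huv
    have h' : u = 0 ∨ v = 0 := by tauto
    rcases h' with rfl | rfl
    · have hv : v ≠ 0 := fun h => hne h.symm
      have := (Finset.mem_sdiff.mp (hcvv v hv)).2
      rw [hcv0]
      exact fun heq => this (heq ▸ Finset.mem_insert_self c0 _)
    · have hu : u ≠ 0 := hne
      have := (Finset.mem_sdiff.mp (hcvv u hu)).2
      rw [hcv0]
      exact fun heq => this (by rw [heq]; exact Finset.mem_insert_self c0 _)
  · -- distinct edges distinct colors
    intro e e' hne _ heq
    exact hne (hfinj heq)
  · -- vertex-edge distance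
    intro v e hv
    obtain ⟨w, hw, hes⟩ := star_edge n e
    rw [hes, Sym2.mem_iff] at hv
    rcases hv with rfl | rfl
    · rw [hcv0]
      have h1 := (Finset.mem_sdiff.mp (hft e)).2
      rw [Finset.mem_Icc] at h1
      rcases abs_cases (c0 - f e) with ⟨h2, _⟩ | ⟨h2, _⟩ <;> omega
    · have he : e = edgeOf v hw := Subtype.ext hes
      have h1 := (Finset.mem_sdiff.mp (hcvv v hw)).2
      rw [Finset.mem_insert, Finset.mem_Icc, not_or] at h1
      obtain ⟨-, h1⟩ := h1
      rw [he]
      rcases abs_cases (cv v - f (edgeOf v hw)) with ⟨h2, _⟩ | ⟨h2, _⟩ <;> omega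
  · -- vertex colors in lists
    intro v
    by_cases h : v = 0
    · subst h; rw [hcv0]; exact hc0
    · exact (Finset.mem_sdiff.mp (hcvv v h)).1
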